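/- Let Λ = diag(√λ_1,…,√λ_r) with each λ_i > 0, and let A, B be r×r complex matrices such that A, I−A, B, I−B are all positive semidefinite. If tr(Λ A Λ(I−B)) = 0 and tr(Λ(I−A)Λ B) = 0, then B = A, A is idempotent (A² = A), and A_{ij} = 0 whenever λ_i ≠ λ_j. -/

import Mathlib

open Matrix
open scoped ComplexOrder

private lemma aux_self_eq_zero {n : Type*} [Fintype n] [DecidableEq n]
    (M : Matrix n n ℂ) (h : (Mᴴ * M).trace = 0) : M = 0 := by
  have key : ∑ j, ∑ i, Complex.normSq (M i j) = 0 := by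
    have h2 : ((∑ j, ∑ i, Complex.normSq (M i j) : ℝ) : ℂ) = 0 := by
      push_cast
      rw [← h]
      simp [Matrix.trace, Matrix.mul_apply, Matrix.conjTranspose_apply,
        Complex.normSq_eq_conj_mul_self, Matrix.diag]
    exact_mod_cast h2
  ext i j
  have h3 := (Finset.sum_eq_zero_iff_of_nonneg
    (fun j _ => Finset.sum_nonneg fun i _ => Complex.normSq_nonneg _)).mp key j
    (Finset.mem_univ j)
  have h4 := (Finset.sum_eq_zero_iff_of_nonneg
    (fun i _ => Complex.normSq_nonneg _)).mp h3 i (Finset.mem_univ i)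
  simpa using Complex.normSq_eq_zero.mp h4

private lemma psd_mul_eq_zero {n : Type*} [Fintype n] [DecidableEq n]
    {X Y : Matrix n n ℂ} (hX : X.PosSemidef) (hY : Y.PosSemidef)
    (h : (X * Y).trace = 0) : X * Y = 0 := by
  obtain ⟨C, hC⟩ : ∃ C : Matrix n n ℂ, X = Cᴴ * C := by
    open scoped MatrixOrder Matrix.Norms.L2Operator in
    exact CStarAlgebra.nonneg_iff_eq_star_mul_self.mp hX.nonneg
  obtain ⟨D, hD⟩ : ∃ D : Matrix n n ℂ, Y = Dᴴ * D := by
    open scoped MatrixOrder Matrix.Norms.L2Operator in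
    exact CStarAlgebra.nonneg_iff_eq_star_mul_self.mp hY.nonneg
  have key : D * Cᴴ = 0 := by
    apply aux_self_eq_zero
    have e : ((D * Cᴴ)ᴴ * (D * Cᴴ)).trace = (X * Y).trace := by
      rw [hC, hD, conjTranspose_mul, conjTranspose_conjTranspose]
      calc (C * Dᴴ * (D * Cᴴ)).trace = ((C * Dᴴ * D) * Cᴴ).trace := by
            congr 1; noncomm_ring
        _ = (Cᴴ * (C * Dᴴ * D)).trace := Matrix.trace_mul_comm _ _
        _ = ((Cᴴ * C) * (Dᴴ * D)).trace := by congr 1; noncomm_ring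
    rw [e, h]
  calc X * Y = Cᴴ * (D * Cᴴ)ᴴ * D := by
        rw [hC, hD, conjTranspose_mul, conjTranspose_conjTranspose]; noncomm_ring
    _ = 0 := by rw [key]; simp

theorem vanishing_traces_force_projector_structure
    (r : ℕ) (l : Fin r → ℝ) (hl : ∀ i, 0 < l i)
    (Λ : Matrix (Fin r) (Fin r) ℂ)
    (hΛ : Λ = Matrix.diagonal (fun i => (Real.sqrt (l i) : ℂ)))
    (A B : Matrix (Fin r) (Fin r) ℂ)
    (hA : A.PosSemidef) (hA' : (1 - A).PosSemidef)
    (hB : B.PosSemidef) (hB' : (1 - B).PosSemidef)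
    (h1 : (Λ * A * Λ * (1 - B)).trace = 0)
    (h2 : (Λ * (1 - A) * Λ * B).trace = 0) :
    B = A ∧ A * A = A ∧ ∀ i j, l i ≠ l j → A i j = 0 := by
  set s : Fin r → ℂ := fun i => (Real.sqrt (l i) : ℂ) with hs
  have hΛH : Λᴴ = Λ := by
    have hstar : star s = s := by
      funext i; simp [hs, Complex.star_def, Complex.conj_ofReal]
    rw [hΛ, Matrix.diagonal_conjTranspose, hstar]
  -- PSD of sandwiched matrices
  have hX1 : (Λ * A * Λ).PosSemidef := by
    have := hA.mul_mul_conjTranspose_same Λ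
    rwa [hΛH] at this
  have hX2 : (Λ * (1 - A) * Λ).PosSemidef := by
    have := hA'.mul_mul_conjTranspose_same Λ
    rwa [hΛH] at this
  have e1 : (Λ * A * Λ) * (1 - B) = 0 := psd_mul_eq_zero hX1 hB' h1
  have e2 : (Λ * (1 - A) * Λ) * B = 0 := psd_mul_eq_zero hX2 hB h2
  have e1' : (1 - B) * (Λ * A * Λ) = 0 := by
    have h' := congrArg Matrix.conjTranspose e1
    simp only [Matrix.conjTranspose_mul, Matrix.conjTranspose_zero, hΛH,
      hA.isHermitian.eq, hB'.isHermitian.eq] at h'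
    linear_combination (norm := noncomm_ring) h'
  have e2' : B * (Λ * (1 - A) * Λ) = 0 := by
    have h' := congrArg Matrix.conjTranspose e2
    simp only [Matrix.conjTranspose_mul, Matrix.conjTranspose_zero, hΛH,
      hA'.isHermitian.eq, hB.isHermitian.eq] at h'
    linear_combination (norm := noncomm_ring) h'
  have M1 : Λ * A * Λ = Λ * A * Λ * B := by
    have : Λ * A * Λ * (1 - B) = Λ * A * Λ - Λ * A * Λ * B := by noncomm_ring
    rw [this] at e1
    linear_combination (norm := noncomm_ring) e1
  have M3 : Λ * A * Λ = B * (Λ * A * Λ) := by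
    have : (1 - B) * (Λ * A * Λ) = Λ * A * Λ - B * (Λ * A * Λ) := by noncomm_ring
    rw [this] at e1'
    linear_combination (norm := noncomm_ring) e1'
  have K1 : Λ * Λ * B = Λ * A * Λ := by
    have h' : Λ * (1 - A) * Λ * B = Λ * Λ * B - Λ * A * Λ * B := by noncomm_ring
    rw [h'] at e2
    have : Λ * Λ * B = Λ * A * Λ * B := by linear_combination (norm := noncomm_ring) e2
    rw [this, ← M1]
  have K2 : B * (Λ * Λ) = Λ * A * Λ := by
    have h' : B * (Λ * (1 - A) * Λ) = B * (Λ * Λ) - B * (Λ * A * Λ) := by noncomm_ring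
    rw [h'] at e2'
    have : B * (Λ * Λ) = B * (Λ * A * Λ) := by linear_combination (norm := noncomm_ring) e2'
    rw [this, ← M3]
  -- scalar facts
  have hs0 : ∀ i, s i ≠ 0 := fun i =>
    Complex.ofReal_ne_zero.mpr (Real.sqrt_pos.mpr (hl i)).ne'
  have hseq : ∀ i j, l i = l j → s i = s j := by
    intro i j h; simp [hs, h]
  -- entrywise equations
  have k1 : ∀ i j, s i * (s i * B i j) = s i * (A i j * s j) := by
    intro i j
    have h' : (Λ * Λ * B) i j = (Λ * A * Λ) i j := by rw [K1]
    rw [hΛ] at h'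
    simpa [Matrix.diagonal_mul, Matrix.mul_diagonal, mul_assoc] using h'
  have k2 : ∀ i j, (B i j * s j) * s j = (s i * A i j) * s j := by
    intro i j
    have h' : (B * (Λ * Λ)) i j = (Λ * A * Λ) i j := by rw [K2]
    rw [hΛ] at h'
    simpa [Matrix.diagonal_mul, Matrix.mul_diagonal, mul_assoc] using h'
  have P : ∀ i j, s i * B i j = A i j * s j := fun i j =>
    mul_left_cancel₀ (hs0 i) (k1 i j)
  have Q : ∀ i j, B i j * s j = s i * A i j := fun i j =>
    mul_right_cancel₀ (hs0 j) (k2 i j)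
  have hA0 : ∀ i j, l i ≠ l j → A i j = 0 := by
    intro i j hij
    have hPQ : s i * s i * A i j = A i j * (s j * s j) := by
      calc s i * s i * A i j = s i * (s i * A i j) := by ring
        _ = s i * (B i j * s j) := by rw [Q]
        _ = (s i * B i j) * s j := by ring
        _ = (A i j * s j) * s j := by rw [P]
        _ = A i j * (s j * s j) := by ring
    have hss : ∀ i, s i * s i = (l i : ℂ) := by
      intro i; rw [hs]; push_cast [← Complex.ofReal_mul]
      rw [Real.mul_self_sqrt (hl i).le]
    rw [hss, hss] at hPQ
    have : ((l i : ℂ) - (l j : ℂ)) * A i j = 0 := by ring_nf; linear_combination hPQ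
    rcases mul_eq_zero.mp this with h | h
    · exact absurd (Complex.ofReal_inj.mp (sub_eq_zero.mp h)) hij
    · exact h
  have hBA : B = A := by
    ext i j
    by_cases hij : l i = l j
    · have hsij := hseq i j hij
      have := P i j
      rw [hsij] at this
      exact mul_left_cancel₀ (hs0 j) (by rw [this]; ring)
    · have h0 := hA0 i j hij
      have := P i j
      rw [h0, zero_mul] at this
      have := mul_eq_zero.mp this
      rw [h0]
      rcases this with h | h
      · exact absurd h (hs0 i)
      · exact h
  have hcomm : Λ * A = A * Λ := by
    rw [hΛ]
    ext i j
    simp only [Matrix.diagonal_mul, Matrix.mul_diagonal]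
    by_cases hij : l i = l j
    · rw [hseq i j hij]; ring
    · rw [hA0 i j hij]; ring
  have hAA : A * A = A := by
    have hMA : Λ * A * Λ = Λ * (A * A) * Λ := by
      calc Λ * A * Λ = Λ * A * Λ * A := by conv_lhs => rw [M1, hBA]
        _ = Λ * A * (Λ * A) := by rw [Matrix.mul_assoc]
        _ = Λ * A * (A * Λ) := by rw [hcomm]
        _ = Λ * (A * A) * Λ := by noncomm_ring
    ext i j
    have h' : (Λ * (A * A) * Λ) i j = (Λ * A * Λ) i j := by rw [hMA]
    rw [hΛ] at h'
    simp only [Matrix.diagonal_mul, Matrix.mul_diagonal] at h'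
    have h'' : s i * ((A * A) i j) * s j = s i * (A i j) * s j := h'
    have := mul_right_cancel₀ (hs0 j) h''
    exact mul_left_cancel₀ (hs0 i) this
  exact ⟨hBA, hAA, hA0⟩
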